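/- Let F_1, ..., F_k be independent sigma-algebras and X_1, ..., X_k square-integrable random variables such that each X_i is F^{−i}-measurable (F^{−i} generated by all F_j, j ≠ i). If E(X_i − X_j)² ≤ ε for all i, j, then the variance of each X_i is at most kε. -/

import Mathlib

open MeasureTheory ProbabilityTheory
open scoped InnerProductSpace ENNReal NNReal

section Aux

/-- If `m₁` is independent of `mX`, `f` is `mX`-measurable and `m₂ ≤ mX`, then
conditioning on `m₁ ⊔ m₂` is the same as conditioning on `m₂`. -/
theorem stmt17_condexp_sup_of_indep {Ω : Type} {m₁ m₂ mX : MeasurableSpace Ω}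
    [mΩ : MeasurableSpace Ω] {μ : Measure Ω} [IsProbabilityMeasure μ] (h₁ : m₁ ≤ mΩ)
    (hXle : mX ≤ mΩ) (h2X : m₂ ≤ mX) (hind : Indep m₁ mX μ) {f : Ω → ℝ}
    (hfm : StronglyMeasurable[mX] f) (hf : Integrable f μ) :
    μ[f | m₁ ⊔ m₂] =ᵐ[μ] μ[f | m₂] := by
  have h₂ : m₂ ≤ mΩ := h2X.trans hXle
  have h₁₂ : m₁ ⊔ m₂ ≤ mΩ := sup_le h₁ h₂
  set C : Set (Set Ω) :=
    {s | ∃ a b, MeasurableSet[m₁] a ∧ MeasurableSet[m₂] b ∧ s = a ∩ b} with hC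
  have h_eq : (m₁ ⊔ m₂) = MeasurableSpace.generateFrom C := by
    refine le_antisymm (sup_le ?_ ?_) (MeasurableSpace.generateFrom_le ?_)
    · intro s hs
      exact MeasurableSpace.measurableSet_generateFrom
        ⟨s, Set.univ, hs, MeasurableSet.univ, (Set.inter_univ s).symm⟩
    · intro s hs
      exact MeasurableSpace.measurableSet_generateFrom
        ⟨Set.univ, s, MeasurableSet.univ, hs, (Set.univ_inter s).symm⟩
    · rintro s ⟨a, b, ha, hb, rfl⟩
      exact ((le_sup_left : m₁ ≤ m₁ ⊔ m₂) a ha).inter ((le_sup_right : m₂ ≤ m₁ ⊔ m₂) b hb)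
  have hPi : IsPiSystem C := by
    rintro s ⟨a, b, ha, hb, rfl⟩ t ⟨a', b', ha', hb', rfl⟩ -
    exact ⟨a ∩ a', b ∩ b', ha.inter ha', hb.inter hb', by
      rw [Set.inter_assoc, ← Set.inter_assoc b, Set.inter_comm b, Set.inter_assoc,
        ← Set.inter_assoc a]⟩
  have hint : ∀ s, MeasurableSet[m₁ ⊔ m₂] s →
      ∫ x in s, (μ[f|m₂]) x ∂μ = ∫ x in s, f x ∂μ := by
    intro s hs
    refine MeasurableSpace.induction_on_inter
      (C := fun s _ => ∫ x in s, (μ[f|m₂]) x ∂μ = ∫ x in s, f x ∂μ)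
      h_eq hPi (by simp) ?_ ?_ ?_ s hs
    · -- basic : s = a ∩ b
      rintro t ⟨a, b, ha, hb, rfl⟩
      have hau : MeasurableSet[mΩ] a := h₁ a ha
      have hbu : MeasurableSet[mΩ] b := h₂ b hb
      have key : ∀ g : Ω → ℝ, Measurable[mX] g → Integrable g μ →
          ∫ x in a ∩ b, g x ∂μ = (μ a).toReal * ∫ x in b, g x ∂μ := by
        intro g hgm hgint
        set u : Ω → ℝ := a.indicator (fun _ => (1:ℝ)) with hu
        have hu_int : Integrable u μ := (integrable_const (1:ℝ)).indicator hau
        have hu_meas : Measurable[m₁] u := measurable_const.indicator ha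
        have hv_meas : Measurable[mX] (b.indicator g) := hgm.indicator (h2X b hb)
        have hv_int : Integrable (b.indicator g) μ := hgint.indicator hbu
        have hiu : IndepFun u (b.indicator g) μ := by
          rw [IndepFun_iff_Indep]
          exact indep_of_indep_of_le_left
            (indep_of_indep_of_le_right hind (measurable_iff_comap_le.mp hv_meas))
            (measurable_iff_comap_le.mp hu_meas)
        have hmul := hiu.integral_mul_eq_mul_integral hu_int.aestronglyMeasurable hv_int.aestronglyMeasurable
        have heq : (u * b.indicator g) = (a ∩ b).indicator g := by
          funext x
          rw [Pi.mul_apply, hu, ← Set.inter_indicator_mul]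
          simp
        calc ∫ x in a ∩ b, g x ∂μ = ∫ x, (a ∩ b).indicator g x ∂μ :=
              (integral_indicator (hau.inter hbu)).symm
          _ = ∫ x, (u * b.indicator g) x ∂μ := by rw [heq]
          _ = (∫ x, u x ∂μ) * ∫ x, b.indicator g x ∂μ := hmul
          _ = (μ a).toReal * ∫ x in b, g x ∂μ := by
              rw [show (∫ x, u x ∂μ) = ∫ x, a.indicator (fun _ => (1:ℝ)) x ∂μ from rfl,
                integral_indicator_const (1:ℝ) hau, integral_indicator hbu]
              simp [Measure.real]
      have hL := key (μ[f|m₂]) ((stronglyMeasurable_condExp.measurable).mono h2X le_rfl)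
        integrable_condExp
      have hR := key f hfm.measurable hf
      rw [hL, hR, setIntegral_condExp h₂ hf hb]
    · -- compl
      intro t htm hteq
      have ht : MeasurableSet[mΩ] t := h₁₂ t htm
      rw [setIntegral_compl ht integrable_condExp, setIntegral_compl ht hf, hteq,
        integral_condExp h₂]
    · -- union
      intro g hdisj hgm hgeq
      have hgm' : ∀ n, MeasurableSet[mΩ] (g n) := fun n => h₁₂ _ (hgm n)
      have h1 := hasSum_integral_iUnion hgm' hdisj (integrable_condExp.integrableOn :
        IntegrableOn (μ[f|m₂]) (⋃ n, g n) μ)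
      have h2 := hasSum_integral_iUnion hgm' hdisj (hf.integrableOn :
        IntegrableOn f (⋃ n, g n) μ)
      have : (fun n => ∫ x in g n, (μ[f|m₂]) x ∂μ) = fun n => ∫ x in g n, f x ∂μ :=
        funext hgeq
      rw [this] at h1
      exact h1.unique h2
  exact (ae_eq_condExp_of_forall_setIntegral_eq h₁₂ hf
    (fun s _ _ => integrable_condExp.integrableOn)
    (fun s hs _ => hint s hs)
    ((stronglyMeasurable_condExp.mono le_sup_right : StronglyMeasurable[m₁ ⊔ m₂] (μ[f|m₂])).aestronglyMeasurable)).symm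

variable {Ω : Type} [mΩ : MeasurableSpace Ω] {μ : Measure Ω} [IsProbabilityMeasure μ]

/-- `condexp` agrees a.e. with `condexpL2` for `L²` functions. -/
theorem stmt17_condexp_ae_eq_condexpL2 {m : MeasurableSpace Ω} (hm : m ≤ mΩ) (f : Lp ℝ 2 μ) :
    μ[f | m] =ᵐ[μ] (condExpL2 ℝ ℝ hm f : Ω → ℝ) := by
  have hfi : Integrable f μ := (Lp.memLp f).integrable (by norm_num)
  exact (ae_eq_condExp_of_forall_setIntegral_eq hm hfi
    (fun s _ hμs => integrableOn_condExpL2_of_measure_ne_top hm hμs.ne f)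
    (fun s hs hμs => integral_condExpL2_eq hm f hs hμs.ne)
    (aestronglyMeasurable_condExpL2 hm f)).symm

/-- squared norm in `L²` as an integral. -/
theorem stmt17_norm_sq_eq (f : Lp ℝ 2 μ) : ‖f‖ ^ 2 = ∫ ω, f ω ^ 2 ∂μ := by
  rw [← real_inner_self_eq_norm_sq, L2.inner_def]
  refine integral_congr_ae (Filter.Eventually.of_forall fun ω => ?_)
  simp [RCLike.inner_apply, sq]

end Aux

section Hilbert

variable {E : Type*} [NormedAddCommGroup E] [InnerProductSpace ℝ E]

open Submodule

/-- pythagoras-type bound for nested projections. -/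
theorem stmt17_proj_step {U V : Submodule ℝ E} [HasOrthogonalProjection U]
    [HasOrthogonalProjection V] (h : U ≤ V) (f g : E)
    (hg : (orthogonalProjection V g : E) = orthogonalProjection U g) :
    ‖f - orthogonalProjection U f‖ ^ 2 ≤
      ‖f - orthogonalProjection V f‖ ^ 2 + ‖f - g‖ ^ 2 := by
  set a : E := f - orthogonalProjection V f with ha
  set b : E := (orthogonalProjection V f : E) - orthogonalProjection U f with hb
  have hbV : b ∈ V := sub_mem (SetLike.coe_mem _) (h (SetLike.coe_mem _))
  have hab : ⟪a, b⟫_ℝ = 0 := by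
    have := starProjection_inner_eq_zero (K := V) f b hbV
    rwa [starProjection_apply] at this
  have hsum : f - (orthogonalProjection U f : E) = a + b := by rw [ha, hb]; abel
  have hpyth : ‖f - (orthogonalProjection U f : E)‖ ^ 2 = ‖a‖ ^ 2 + ‖b‖ ^ 2 := by
    rw [hsum, norm_add_sq_real, hab]; ring
  -- now bound ‖b‖ by ‖f - g‖
  set d : E := f - g with hd
  have hbd : b = (orthogonalProjection V d : E) - orthogonalProjection U d := by
    rw [hd, map_sub, map_sub, hb]
    push_cast
    rw [hg]
    abel
  have htower : (orthogonalProjection U ((orthogonalProjection V d : E)) : E) =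
      orthogonalProjection U d := by
    have := orthogonalProjectionOnto_starProjection_of_le h d
    rw [starProjection_apply] at this
    exact congrArg Subtype.val this
  set c : E := (orthogonalProjection V d : E) with hc
  have hbc : b = c - orthogonalProjection U c := by rw [hbd, htower]
  have h1 : ‖b‖ ^ 2 ≤ ‖c‖ ^ 2 := by
    have horth : ⟪c - orthogonalProjection U c, (orthogonalProjection U c : E)⟫_ℝ = 0 :=
      by
        have := starProjection_inner_eq_zero (K := U) c _ (SetLike.coe_mem (orthogonalProjection U c))
        rwa [starProjection_apply] at this
    have : ‖c‖ ^ 2 = ‖c - orthogonalProjection U c‖ ^ 2 + ‖(orthogonalProjection U c : E)‖ ^ 2 := by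
      have : c = (c - orthogonalProjection U c) + orthogonalProjection U c := by abel
      nth_rewrite 1 [this]
      rw [norm_add_sq_real, horth]; ring
    rw [hbc, this]
    nlinarith [norm_nonneg ((orthogonalProjection U c : E))]
  have h2 : ‖c‖ ≤ ‖d‖ := by
    calc ‖c‖ = ‖orthogonalProjection V d‖ := by rw [hc, Submodule.norm_coe]
      _ ≤ ‖d‖ := by
          calc ‖orthogonalProjection V d‖ ≤ ‖orthogonalProjection V‖ * ‖d‖ :=
                (orthogonalProjection V).le_opNorm d
            _ ≤ 1 * ‖d‖ := by
                have := orthogonalProjection_norm_le V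
                nlinarith [norm_nonneg d]
            _ = ‖d‖ := one_mul _
  have h3 : ‖b‖ ^ 2 ≤ ‖d‖ ^ 2 := by nlinarith [norm_nonneg c, norm_nonneg b, norm_nonneg d]
  rw [hpyth]
  have : ‖a‖ = ‖f - orthogonalProjection V f‖ := by rw [ha]
  nlinarith

end Hilbert

/-- Let `F 1, …, F k` be independent σ-algebras and `X 1, …, X k` square-integrable random
variables such that each `X i` is measurable with respect to `F⁻ⁱ = ⋁_{j ≠ i} F j`.  If
`E(Xᵢ − Xⱼ)² ≤ ε` for all `i, j`, then the variance of each `X i` is at most `k ε`. -/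
theorem stmt17 {Ω : Type} [mΩ : MeasurableSpace Ω] (μ : Measure Ω)
    [IsProbabilityMeasure μ] {k : ℕ} (F : Fin k → MeasurableSpace Ω)
    (hle : ∀ i, F i ≤ mΩ) (hindep : iIndep F μ)
    (X : Fin k → Ω → ℝ) (hX : ∀ i, MemLp (X i) 2 μ)
    (hmeas : ∀ i, Measurable[⨆ j, ⨆ _ : j ≠ i, F j] (X i)) (ε : ℝ)
    (hclose : ∀ i j, ∫ ω, (X i ω - X j ω) ^ 2 ∂μ ≤ ε) :
    ∀ i, variance (X i) μ ≤ k * ε := by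
  intro i
  haveI : NeZero k := ⟨i.pos.ne'⟩
  have hε : 0 ≤ ε := by simpa using hclose i i
  set e : Fin k ≃ Fin k := Equiv.swap 0 i with he
  set G : ℕ → MeasurableSpace Ω := fun m => ⨆ (t : Fin k) (_ : m ≤ (t : ℕ)), F (e t) with hG
  have hGle : ∀ m, G m ≤ mΩ := fun m => iSup₂_le fun t _ => hle _
  have hGanti : ∀ m, G (m + 1) ≤ G m := fun m =>
    iSup₂_le fun t ht => le_iSup₂ (f := fun (t : Fin k) (_ : m ≤ (t : ℕ)) => F (e t)) t (by omega)
  have hGbot : G k = ⊥ := le_bot_iff.mp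
    (iSup₂_le fun t ht => absurd t.isLt (by omega))
  set fL : Lp ℝ 2 μ := (hX i).toLp (X i) with hfL
  -- `X i` is measurable w.r.t. `G 1`
  have hMle : (⨆ j, ⨆ _ : j ≠ i, F j) ≤ G 1 := by
    refine iSup₂_le fun j hj => ?_
    have h1 : e j ≠ 0 := by
      intro h
      apply hj
      have h2 : e (e j) = e 0 := by rw [h]
      rw [Equiv.swap_apply_self] at h2
      rw [h2, he, Equiv.swap_apply_left]
    have h2 : F j = F (e (e j)) := by rw [Equiv.swap_apply_self]
    rw [h2]
    exact le_iSup₂ (f := fun (t : Fin k) (_ : 1 ≤ (t : ℕ)) => F (e t)) (e j)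
      (Nat.one_le_iff_ne_zero.mpr fun hc => h1 (Fin.ext (by simpa using hc)))
  have hmem : fL ∈ lpMeas ℝ ℝ (G 1) 2 μ :=
    mem_lpMeas_iff_aestronglyMeasurable.mpr
      (((hmeas i).mono hMle le_rfl).stronglyMeasurable.aestronglyMeasurable.congr (hX i).coeFn_toLp.symm)
  -- main induction
  have key : ∀ m : ℕ, m + 1 ≤ k →
      ‖fL - ((condExpL2 ℝ ℝ (hGle (m + 1)) fL : lpMeas ℝ ℝ (G (m + 1)) 2 μ) : Lp ℝ 2 μ)‖ ^ 2
        ≤ m * ε := by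
    intro m
    induction m with
    | zero =>
      intro _
      haveI : Fact (G 1 ≤ mΩ) := ⟨hGle 1⟩
      have hself : ((condExpL2 ℝ ℝ (hGle 1) fL : lpMeas ℝ ℝ (G 1) 2 μ) : Lp ℝ 2 μ) = fL :=
        by
          have := Submodule.starProjection_eq_self_iff.mpr hmem
          rw [Submodule.starProjection_apply] at this
          exact this
      rw [hself, sub_self]
      simp
    | succ m IH =>
      intro hmk
      have IH' := IH (by omega)
      set tm : Fin k := ⟨m + 1, by omega⟩ with htm
      set j : Fin k := e tm with hj
      set gL : Lp ℝ 2 μ := (hX j).toLp (X j) with hgL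
      have hsup : G (m + 1) = F j ⊔ G (m + 2) := by
        apply le_antisymm
        · refine iSup₂_le fun t ht => ?_
          by_cases htm' : t = tm
          · subst htm'
            exact le_sup_left
          · refine le_trans (le_iSup₂ (f := fun (t : Fin k) (_ : m + 2 ≤ (t : ℕ)) => F (e t)) t ?_)
              le_sup_right
            have hne : (t : ℕ) ≠ m + 1 := fun hc => htm' (Fin.ext (by simpa using hc))
            omega
        · refine sup_le ?_ (hGanti (m + 1))
          exact le_iSup₂ (f := fun (t : Fin k) (_ : m + 1 ≤ (t : ℕ)) => F (e t)) tm le_rfl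
      have hGM : G (m + 2) ≤ ⨆ l, ⨆ _ : l ≠ j, F l := by
        refine iSup₂_le fun t ht => ?_
        refine le_iSup₂ (f := fun (l : Fin k) (_ : l ≠ j) => F l) (e t) ?_
        intro hc
        have h3 : t = tm := e.injective hc
        rw [h3] at ht
        have : m + 2 ≤ m + 1 := ht
        omega
      have hindj : Indep (F j) (⨆ l, ⨆ _ : l ≠ j, F l) μ := by
        have h := indep_biSup_compl hle hindep {j}
        simpa [Set.mem_compl_iff, Set.mem_singleton_iff, iSup_iSup_eq_left] using h
      have hXj_int : Integrable (X j) μ := (hX j).integrable one_le_two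
      have hcond : μ[X j | G (m + 1)] =ᵐ[μ] μ[X j | G (m + 2)] := by
        rw [hsup]
        exact stmt17_condexp_sup_of_indep (hle j) (iSup₂_le fun l _ => hle l) hGM hindj
          ((hmeas j).stronglyMeasurable) hXj_int
      have hgP : ((condExpL2 ℝ ℝ (hGle (m + 1)) gL : lpMeas ℝ ℝ (G (m + 1)) 2 μ) : Lp ℝ 2 μ)
          = ((condExpL2 ℝ ℝ (hGle (m + 2)) gL : lpMeas ℝ ℝ (G (m + 2)) 2 μ) : Lp ℝ 2 μ) := by
        apply Lp.ext (p := (2 : ℝ≥0∞))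
        calc ((condExpL2 ℝ ℝ (hGle (m + 1)) gL : lpMeas ℝ ℝ (G (m + 1)) 2 μ) : Ω → ℝ)
            =ᵐ[μ] μ[gL | G (m + 1)] := (stmt17_condexp_ae_eq_condexpL2 _ gL).symm
          _ =ᵐ[μ] μ[X j | G (m + 1)] := condExp_congr_ae ((hX j).coeFn_toLp)
          _ =ᵐ[μ] μ[X j | G (m + 2)] := hcond
          _ =ᵐ[μ] μ[gL | G (m + 2)] := condExp_congr_ae ((hX j).coeFn_toLp).symm
          _ =ᵐ[μ] ((condExpL2 ℝ ℝ (hGle (m + 2)) gL : lpMeas ℝ ℝ (G (m + 2)) 2 μ) : Ω → ℝ) :=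
              stmt17_condexp_ae_eq_condexpL2 _ gL
      haveI : Fact (G (m + 1) ≤ mΩ) := ⟨hGle _⟩
      haveI : Fact (G (m + 2) ≤ mΩ) := ⟨hGle _⟩
      have hUV : lpMeas ℝ ℝ (G (m + 2)) 2 μ ≤ lpMeas ℝ ℝ (G (m + 1)) 2 μ := by
        intro u hu
        rw [mem_lpMeas_iff_aestronglyMeasurable] at hu ⊢
        exact AEStronglyMeasurable.mono (hGanti (m + 1)) hu
      have hstep := stmt17_proj_step hUV fL gL hgP
      have hnorm : ‖fL - gL‖ ^ 2 ≤ ε := by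
        rw [stmt17_norm_sq_eq]
        refine le_trans (le_of_eq (integral_congr_ae ?_)) (hclose i j)
        filter_upwards [Lp.coeFn_sub fL gL, (hX i).coeFn_toLp, (hX j).coeFn_toLp]
          with ω h1 h2 h3
        rw [h1]
        simp only [Pi.sub_apply]
        rw [h2, h3]
      calc ‖fL - ((condExpL2 ℝ ℝ (hGle (m + 2)) fL : lpMeas ℝ ℝ (G (m + 2)) 2 μ) : Lp ℝ 2 μ)‖ ^ 2
          ≤ ‖fL - ((condExpL2 ℝ ℝ (hGle (m + 1)) fL : lpMeas ℝ ℝ (G (m + 1)) 2 μ) : Lp ℝ 2 μ)‖ ^ 2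
            + ‖fL - gL‖ ^ 2 := hstep
        _ ≤ m * ε + ε := add_le_add IH' hnorm
        _ = (↑(m + 1) : ℝ) * ε := by push_cast; ring
  -- conclusion
  have hk1 : (k - 1) + 1 = k := Nat.succ_pred_eq_of_pos i.pos
  have hkey := key (k - 1) (by omega)
  rw [hk1] at hkey
  have h2 : μ[fL | G k] =ᵐ[μ] fun _ => ∫ x, X i x ∂μ := by
    rw [hGbot, condExp_bot, integral_congr_ae ((hX i).coeFn_toLp)]
  have hbotae : ((condExpL2 ℝ ℝ (hGle k) fL : lpMeas ℝ ℝ (G k) 2 μ) : Ω → ℝ)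
      =ᵐ[μ] fun _ => ∫ x, X i x ∂μ :=
    (stmt17_condexp_ae_eq_condexpL2 (hGle k) fL).symm.trans h2
  have hvar : variance (X i) μ
      = ‖fL - ((condExpL2 ℝ ℝ (hGle k) fL : lpMeas ℝ ℝ (G k) 2 μ) : Lp ℝ 2 μ)‖ ^ 2 := by
    rw [stmt17_norm_sq_eq, variance_eq_integral (hX i).aemeasurable]
    refine integral_congr_ae ?_
    filter_upwards [Lp.coeFn_sub fL ((condExpL2 ℝ ℝ (hGle k) fL : lpMeas ℝ ℝ (G k) 2 μ) : Lp ℝ 2 μ),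
      (hX i).coeFn_toLp, hbotae] with ω h1 h2 h3
    rw [h1, Pi.sub_apply, h2, h3]
  rw [hvar]
  refine hkey.trans ?_
  have : ((k - 1 : ℕ) : ℝ) ≤ (k : ℝ) := by exact_mod_cast Nat.sub_le k 1
  exact mul_le_mul_of_nonneg_right this hε
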